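/- Let P be a string occurring at positions i and i' in a text T, and suppose a parsing boundary function assigns a boundary decision at each position depending only on the Δ_L characters to the left and Δ_R characters to the right. Then for any offset k with Δ_L ≤ k and k + Δ_R ≤ |P|, position i + k - 1 is a boundary if and only if position i' + k - 1 is a boundary. -/
import Mathlib


/-- A boundary decision depending only on ΔL characters to the left and ΔR to
the right is consistent across two occurrences of the same string P. -/
theorem stmt_12 {α : Type*} (T : ℤ → α) (b : ℤ → Bool) (ΔL ΔR : ℕ)
    (hloc : ∀ j j' : ℤ,
      (∀ t : ℤ, -(ΔL : ℤ) ≤ t → t ≤ (ΔR : ℤ) → T (j + t) = T (j' + t)) →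
      b j = b j')
    (m : ℕ) (i i' : ℤ)
    (hocc : ∀ k : ℕ, k < m → T (i + k) = T (i' + k)) :
    ∀ k : ℕ, ΔL ≤ k → k + ΔR < m → b (i + k) = b (i' + k) := by
  intro k hL hR
  apply hloc
  intro t ht1 ht2
  have h0 : (0 : ℤ) ≤ (k : ℤ) + t := by
    have : (ΔL : ℤ) ≤ (k : ℤ) := by exact_mod_cast hL
    omega
  obtain ⟨n, hn⟩ := Int.eq_ofNat_of_zero_le h0
  have hlt : n < m := by
    have : ((k + ΔR : ℕ) : ℤ) < (m : ℤ) := by exact_mod_cast hR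
    push_cast at this
    omega
  have := hocc n hlt
  rw [← hn] at this
  simpa [add_assoc] using this
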